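/- If a pentagonal geometry PENT(3,r) with exactly two opposite line pairs exists, then the number of lines entirely within the 2(r-4) points outside the opposite line pairs, namely (2r² - 32r + 132)/3, is at least 2r - 8; equivalently (2r-19)² ≥ 49, so r ∉ {7,9,10,12}. -/

import Mathlib

open scoped Classical

/-- A pentagonal geometry PENT(k,r). -/
structure PentGeom (V : Type) [Fintype V] [DecidableEq V] (k r : ℕ) : Type where
  lines : Finset (Finset V)
  size_pos : 2 ≤ k
  rep_pos : 1 ≤ r
  pairwise : ∀ x y : V, x ≠ y → (lines.filter (fun l => x ∈ l ∧ y ∈ l)).card ≤ 1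
  uniform : ∀ l ∈ lines, l.card = k
  regular : ∀ x : V, (lines.filter (fun l => x ∈ l)).card = r
  opp : ∀ x : V,
    (Finset.univ.filter (fun y => y ≠ x ∧ ∀ l ∈ lines, ¬(x ∈ l ∧ y ∈ l))) ∈ lines

variable {V : Type} [Fintype V] [DecidableEq V] {k r : ℕ}

/-- The opposite line of a point. -/
def PentGeom.oppLine (P : PentGeom V k r) (x : V) : Finset V :=
  Finset.univ.filter (fun y => y ≠ x ∧ ∀ l ∈ P.lines, ¬(x ∈ l ∧ y ∈ l))

/-- Two points are collinear if some line contains both. -/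
def PentGeom.Collinear (P : PentGeom V k r) (x y : V) : Prop :=
  x ≠ y ∧ ∃ l ∈ P.lines, x ∈ l ∧ y ∈ l

/-- An opposite line pair. -/
def PentGeom.OppPair (P : PentGeom V k r) (l m : Finset V) : Prop :=
  l ∈ P.lines ∧ m ∈ P.lines ∧ l ≠ m ∧
    (∀ x ∈ l, P.oppLine x = m) ∧ (∀ y ∈ m, P.oppLine y = l)

namespace Aux

variable (P : PentGeom V k r)

lemma mem_oppLine_iff {x y : V} :
    y ∈ P.oppLine x ↔ y ≠ x ∧ ∀ l ∈ P.lines, ¬(x ∈ l ∧ y ∈ l) := by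
  simp [PentGeom.oppLine]

lemma not_mem_oppLine_self (x : V) : x ∉ P.oppLine x := by
  simp [mem_oppLine_iff]

lemma oppLine_symm {x y : V} (h : y ∈ P.oppLine x) : x ∈ P.oppLine y := by
  rw [mem_oppLine_iff] at h ⊢
  exact ⟨h.1.symm, fun l hl hxl => h.2 l hl ⟨hxl.2, hxl.1⟩⟩

lemma oppLine_mem (x : V) : P.oppLine x ∈ P.lines := P.opp x

lemma line_unique {x y : V} {l l' : Finset V} (hxy : x ≠ y)
    (hl : l ∈ P.lines) (hl' : l' ∈ P.lines)
    (hx : x ∈ l) (hy : y ∈ l) (hx' : x ∈ l') (hy' : y ∈ l') : l = l' := by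
  have h := P.pairwise x y hxy
  rw [Finset.card_le_one] at h
  exact h l (Finset.mem_filter.2 ⟨hl, hx, hy⟩) l' (Finset.mem_filter.2 ⟨hl', hx', hy'⟩)

lemma exists_line {x y : V} (hxy : y ≠ x) (h : y ∉ P.oppLine x) :
    ∃ l ∈ P.lines, x ∈ l ∧ y ∈ l := by
  rw [mem_oppLine_iff] at h
  push_neg at h
  obtain ⟨l, hl, h1, h2⟩ := h hxy
  exact ⟨l, hl, h1, h2⟩

lemma not_collinear_of_mem_oppLine {x y : V} (h : y ∈ P.oppLine x)
    {l : Finset V} (hl : l ∈ P.lines) (hx : x ∈ l) : y ∉ l := by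
  rw [mem_oppLine_iff] at h
  exact fun hy => h.2 l hl ⟨hx, hy⟩

lemma pair_count {x y : V} (hxy : y ≠ x) (h : y ∉ P.oppLine x) :
    (P.lines.filter (fun l => x ∈ l ∧ y ∈ l)).card = 1 := by
  refine le_antisymm (P.pairwise x y (Ne.symm hxy)) ?_
  obtain ⟨l, hl, h1, h2⟩ := exists_line P hxy h
  exact Finset.card_pos.2 ⟨l, Finset.mem_filter.2 ⟨hl, h1, h2⟩⟩

end Aux

namespace Aux3

variable (P : PentGeom V 3 r)

lemma line_card {l : Finset V} (hl : l ∈ P.lines) : l.card = 3 := P.uniform l hl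

lemma oppLine_card (x : V) : (P.oppLine x).card = 3 := P.uniform _ (P.opp x)

open Finset in
lemma sum_inter_card (T : Finset V) :
    ∑ t ∈ P.lines, (t ∩ T).card = T.card * r := by
  have h1 : ∀ t : Finset V, (t ∩ T).card = ∑ x ∈ T, if x ∈ t then 1 else 0 := by
    intro t
    rw [Finset.inter_comm, ← Finset.filter_mem_eq_inter, Finset.card_filter]
  calc ∑ t ∈ P.lines, (t ∩ T).card
      = ∑ t ∈ P.lines, ∑ x ∈ T, if x ∈ t then 1 else 0 := by
        exact Finset.sum_congr rfl (fun t _ => h1 t)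
    _ = ∑ x ∈ T, ∑ t ∈ P.lines, if x ∈ t then 1 else 0 := Finset.sum_comm
    _ = ∑ x ∈ T, (P.lines.filter (fun t => x ∈ t)).card := by
        exact Finset.sum_congr rfl (fun x _ => (Finset.card_filter _ _).symm)
    _ = ∑ x ∈ T, r := Finset.sum_congr rfl (fun x _ => P.regular x)
    _ = T.card * r := by rw [Finset.sum_const, smul_eq_mul]

lemma card_univ (P : PentGeom V 3 r) (x₀ : V) : (Finset.univ : Finset V).card = 2 * r + 4 := by
  classical
  set B : Finset V := (P.lines.filter (fun l => x₀ ∈ l)).biUnion (fun l => l.erase x₀) with hB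
  have hBcard : B.card = 2 * r := by
    rw [hB, Finset.card_biUnion]
    · have : ∀ l ∈ P.lines.filter (fun l => x₀ ∈ l), (l.erase x₀).card = 2 := by
        intro l hl
        rw [Finset.mem_filter] at hl
        rw [Finset.card_erase_of_mem hl.2, line_card P hl.1]
      rw [Finset.sum_congr rfl this, Finset.sum_const, P.regular x₀, smul_eq_mul, mul_comm]
    · intro l hl l' hl' hne
      rw [Finset.mem_coe, Finset.mem_filter] at hl hl'
      rw [Function.onFun, Finset.disjoint_left]
      intro y hy hy'
      have hyx : y ≠ x₀ := Finset.ne_of_mem_erase hy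
      exact hne (Aux.line_unique P hyx.symm hl.1 hl'.1 hl.2 (Finset.mem_of_mem_erase hy)
        hl'.2 (Finset.mem_of_mem_erase hy'))
  have hdisj : Disjoint (P.oppLine x₀) B := by
    rw [Finset.disjoint_left]
    intro y hy hyB
    rw [hB, Finset.mem_biUnion] at hyB
    obtain ⟨l, hl, hyl⟩ := hyB
    rw [Finset.mem_filter] at hl
    exact Aux.not_collinear_of_mem_oppLine P hy hl.1 hl.2 (Finset.mem_of_mem_erase hyl)
  have hx₀ : x₀ ∉ P.oppLine x₀ ∪ B := by
    rw [Finset.mem_union]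
    rintro (h | h)
    · exact Aux.not_mem_oppLine_self P x₀ h
    · rw [hB, Finset.mem_biUnion] at h
      obtain ⟨l, _, hl⟩ := h
      exact (Finset.mem_erase.1 hl).1 rfl
  have hsub : insert x₀ (P.oppLine x₀ ∪ B) = Finset.univ := by
    apply Finset.eq_univ_of_forall
    intro y
    by_cases hyx : y = x₀
    · simp [hyx]
    · rw [Finset.mem_insert, Finset.mem_union]
      by_cases hyo : y ∈ P.oppLine x₀
      · exact Or.inr (Or.inl hyo)
      · obtain ⟨l, hl, hx, hy⟩ := Aux.exists_line P (Ne.intro hyx) hyo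
        exact Or.inr (Or.inr (Finset.mem_biUnion.2
          ⟨l, Finset.mem_filter.2 ⟨hl, hx⟩, Finset.mem_erase.2 ⟨hyx, hy⟩⟩))
  rw [← hsub, Finset.card_insert_of_notMem hx₀, Finset.card_union_of_disjoint hdisj,
    oppLine_card, hBcard]
  ring

end Aux3

namespace Aux4

variable {P : PentGeom V 3 r}

lemma oppPair_symm {l m : Finset V} (h : P.OppPair l m) : P.OppPair m l :=
  ⟨h.2.1, h.1, h.2.2.1.symm, h.2.2.2.2, h.2.2.2.1⟩

lemma oppPair_ne {l m : Finset V} (h : P.OppPair l m) : l ≠ m := h.2.2.1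

lemma oppPair_disjoint {l m : Finset V} (h : P.OppPair l m) : Disjoint l m := by
  rw [Finset.disjoint_left]
  intro x hxl hxm
  have := h.2.2.2.1 x hxl
  exact Aux.not_mem_oppLine_self P x (this ▸ hxm)

lemma cross_disjoint {l₁ m₁ l₂ m₂ : Finset V} (h₁ : P.OppPair l₁ m₁) (h₂ : P.OppPair l₂ m₂)
    (hd : ({l₁, m₁} : Finset (Finset V)) ≠ {l₂, m₂}) : Disjoint l₁ l₂ := by
  rw [Finset.disjoint_left]
  intro x hx1 hx2
  have hm : m₁ = m₂ := by
    rw [← h₁.2.2.2.1 x hx1, ← h₂.2.2.2.1 x hx2]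
  have hm₁ne : m₁.Nonempty := by
    rw [← Finset.card_pos, Aux3.line_card P h₁.2.1]; omega
  obtain ⟨y, hy⟩ := hm₁ne
  have hl : l₁ = l₂ := by
    rw [← h₁.2.2.2.2 y hy, ← h₂.2.2.2.2 y (hm ▸ hy)]
  exact hd (by rw [hl, hm])

lemma side_line {l m t : Finset V} {p q : V} (h : P.OppPair l m) (ht : t ∈ P.lines)
    (hp : p ∈ l ∪ m) (hq : q ∈ l ∪ m) (hpq : p ≠ q) (hpt : p ∈ t) (hqt : q ∈ t) :
    t = l ∨ t = m := by
  rw [Finset.mem_union] at hp hq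
  rcases hp with hp | hp <;> rcases hq with hq | hq
  · exact Or.inl (Aux.line_unique P hpq ht h.1 hpt hqt hp hq)
  · exfalso
    have : q ∈ P.oppLine p := (h.2.2.2.1 p hp) ▸ hq
    exact Aux.not_collinear_of_mem_oppLine P this ht hpt hqt
  · exfalso
    have : p ∈ P.oppLine q := (h.2.2.2.1 q hq) ▸ hp
    exact Aux.not_collinear_of_mem_oppLine P this ht hqt hpt
  · exact Or.inr (Aux.line_unique P hpq ht h.2.1 hpt hqt hp hq)

lemma sub_S_eq {l₁ m₁ l₂ m₂ t : Finset V} (h₁ : P.OppPair l₁ m₁) (h₂ : P.OppPair l₂ m₂)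
    (ht : t ∈ P.lines) (hts : t ⊆ l₁ ∪ m₁ ∪ (l₂ ∪ m₂)) :
    t = l₁ ∨ t = m₁ ∨ t = l₂ ∨ t = m₂ := by
  obtain ⟨a, b, c, hab, hac, hbc, habc⟩ := Finset.card_eq_three.1 (Aux3.line_card P ht)
  have hat : a ∈ t := by rw [habc]; simp
  have hbt : b ∈ t := by rw [habc]; simp
  have hct : c ∈ t := by rw [habc]; simp
  have hmem : ∀ x ∈ t, x ∈ l₁ ∪ m₁ ∨ x ∈ l₂ ∪ m₂ := by
    intro x hx
    have := hts hx
    rw [Finset.mem_union] at this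
    exact this
  have key : ∀ x y : V, x ≠ y → x ∈ t → y ∈ t → x ∈ l₁ ∪ m₁ → y ∈ l₁ ∪ m₁ →
      t = l₁ ∨ t = m₁ ∨ t = l₂ ∨ t = m₂ := by
    intro x y hxy hxt hyt hx hy
    rcases side_line h₁ ht hx hy hxy hxt hyt with h | h
    · exact Or.inl h
    · exact Or.inr (Or.inl h)
  have key2 : ∀ x y : V, x ≠ y → x ∈ t → y ∈ t → x ∈ l₂ ∪ m₂ → y ∈ l₂ ∪ m₂ →
      t = l₁ ∨ t = m₁ ∨ t = l₂ ∨ t = m₂ := by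
    intro x y hxy hxt hyt hx hy
    rcases side_line h₂ ht hx hy hxy hxt hyt with h | h
    · exact Or.inr (Or.inr (Or.inl h))
    · exact Or.inr (Or.inr (Or.inr h))
  rcases hmem a hat with ha | ha <;> rcases hmem b hbt with hb | hb <;>
    rcases hmem c hct with hc | hc
  · exact key a b hab hat hbt ha hb
  · exact key a b hab hat hbt ha hb
  · exact key a c hac hat hct ha hc
  · exact key2 b c hbc hbt hct hb hc
  · exact key b c hbc hbt hct hb hc
  · exact key2 a c hac hat hct ha hc
  · exact key2 a b hab hat hbt ha hb
  · exact key2 a b hab hat hbt ha hb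

lemma oppLine_subset_C {l₁ m₁ l₂ m₂ : Finset V} (h₁ : P.OppPair l₁ m₁) (h₂ : P.OppPair l₂ m₂)
    {x : V} (hx : x ∉ l₁ ∪ m₁ ∪ l₂ ∪ m₂) :
    P.oppLine x ⊆ Finset.univ \ (l₁ ∪ m₁ ∪ l₂ ∪ m₂) := by
  intro y hy
  rw [Finset.mem_sdiff]
  refine ⟨Finset.mem_univ y, fun hyS => ?_⟩
  have hxy : x ∈ P.oppLine y := Aux.oppLine_symm P hy
  simp only [Finset.mem_union] at hyS hx
  rcases hyS with ((hyl | hyl) | hyl) | hyl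
  · exact hx (Or.inl (Or.inl (Or.inr ((h₁.2.2.2.1 y hyl) ▸ hxy))))
  · exact hx (Or.inl (Or.inl (Or.inl ((h₁.2.2.2.2 y hyl) ▸ hxy))))
  · exact hx (Or.inr ((h₂.2.2.2.1 y hyl) ▸ hxy))
  · exact hx (Or.inl (Or.inr ((h₂.2.2.2.2 y hyl) ▸ hxy)))

lemma oppLine_injOn {l₁ m₁ l₂ m₂ : Finset V}
    (honlytwo : ∀ l m : Finset V, P.OppPair l m →
      ({l, m} : Finset (Finset V)) = {l₁, m₁} ∨ ({l, m} : Finset (Finset V)) = {l₂, m₂})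
    {x y : V} (hx : x ∉ l₁ ∪ m₁ ∪ l₂ ∪ m₂) (hxy : x ≠ y)
    (heq : P.oppLine x = P.oppLine y) : False := by
  have hyno : y ∉ P.oppLine x := heq ▸ Aux.not_mem_oppLine_self P y
  obtain ⟨l, hl, hxl, hyl⟩ := Aux.exists_line P hxy.symm hyno
  set m := P.oppLine x with hm
  have hmlines : m ∈ P.lines := P.opp x
  have hzl : ∀ z ∈ m, P.oppLine z = l := by
    intro z hz
    have hxz : x ∈ P.oppLine z := Aux.oppLine_symm P hz
    have hyz : y ∈ P.oppLine z := Aux.oppLine_symm P (heq ▸ hz)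
    exact Aux.line_unique P hxy (P.opp z) hl hxz hyz hxl hyl
  have hpl : ∀ p ∈ l, P.oppLine p = m := by
    intro p hp
    have hsub : m ⊆ P.oppLine p := by
      intro z hz
      exact Aux.oppLine_symm P (by rw [hzl z hz]; exact hp)
    exact (Finset.eq_of_subset_of_card_le hsub
      (by rw [Aux3.oppLine_card, Aux3.line_card P hmlines])).symm
  have hlm : l ≠ m := by
    intro h
    exact Aux.not_mem_oppLine_self P x (hm ▸ h ▸ hxl)
  have hpair : P.OppPair l m := ⟨hl, hmlines, hlm, hpl, hzl⟩
  have hlin : l = l₁ ∨ l = m₁ ∨ l = l₂ ∨ l = m₂ := by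
    rcases honlytwo l m hpair with h | h
    · have : l ∈ ({l₁, m₁} : Finset (Finset V)) := h ▸ (by simp)
      rw [Finset.mem_insert, Finset.mem_singleton] at this
      tauto
    · have : l ∈ ({l₂, m₂} : Finset (Finset V)) := h ▸ (by simp)
      rw [Finset.mem_insert, Finset.mem_singleton] at this
      tauto
  simp only [Finset.mem_union] at hx
  rcases hlin with h | h | h | h <;> subst h <;> tauto

end Aux4

namespace Aux5

lemma sum_split {α : Type*} [DecidableEq α] (s : Finset α) (f : α → ℕ)
    (h : ∀ a ∈ s, f a ≤ 3) :
    ∑ a ∈ s, f a = (s.filter (fun a => f a = 1)).card + 2 * (s.filter (fun a => f a = 2)).card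
      + 3 * (s.filter (fun a => f a = 3)).card := by
  rw [Finset.card_filter, Finset.card_filter, Finset.card_filter, Finset.mul_sum, Finset.mul_sum,
    ← Finset.sum_add_distrib, ← Finset.sum_add_distrib]
  refine Finset.sum_congr rfl fun a ha => ?_
  have hfa : f a ≤ 3 := h a ha
  interval_cases hc : f a <;> simp

lemma card_split {α : Type*} [DecidableEq α] (s : Finset α) (f : α → ℕ)
    (h : ∀ a ∈ s, f a ≤ 3) :
    s.card = (s.filter (fun a => f a = 0)).card + (s.filter (fun a => f a = 1)).card
      + (s.filter (fun a => f a = 2)).card + (s.filter (fun a => f a = 3)).card := by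
  rw [Finset.card_filter, Finset.card_filter, Finset.card_filter, Finset.card_filter,
    ← Finset.sum_add_distrib, ← Finset.sum_add_distrib, ← Finset.sum_add_distrib,
    Finset.card_eq_sum_ones]
  refine Finset.sum_congr rfl fun a ha => ?_
  have hfa : f a ≤ 3 := h a ha
  interval_cases hc : f a <;> simp

variable {P : PentGeom V 3 r}

lemma sum_prod_eq (A B : Finset V)
    (hcount : ∀ x ∈ A, ∀ u ∈ B, (P.lines.filter (fun t => x ∈ t ∧ u ∈ t)).card = 1) :
    ∑ t ∈ P.lines, (t ∩ A).card * (t ∩ B).card = A.card * B.card := by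
  have hprod : ∀ t : Finset V, (t ∩ A).card * (t ∩ B).card
      = ∑ x ∈ A, ∑ u ∈ B, if x ∈ t ∧ u ∈ t then 1 else 0 := by
    intro t
    have hA : (t ∩ A).card = ∑ x ∈ A, if x ∈ t then 1 else 0 := by
      rw [Finset.inter_comm, ← Finset.filter_mem_eq_inter, Finset.card_filter]
    have hB : (t ∩ B).card = ∑ u ∈ B, if u ∈ t then 1 else 0 := by
      rw [Finset.inter_comm, ← Finset.filter_mem_eq_inter, Finset.card_filter]
    rw [hA, hB, Finset.sum_mul_sum]
    refine Finset.sum_congr rfl fun x _ => Finset.sum_congr rfl fun u _ => ?_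
    by_cases hx : x ∈ t <;> by_cases hu : u ∈ t <;> simp [hx, hu]
  calc ∑ t ∈ P.lines, (t ∩ A).card * (t ∩ B).card
      = ∑ t ∈ P.lines, ∑ x ∈ A, ∑ u ∈ B, if x ∈ t ∧ u ∈ t then 1 else 0 :=
        Finset.sum_congr rfl fun t _ => hprod t
    _ = ∑ x ∈ A, ∑ t ∈ P.lines, ∑ u ∈ B, (if x ∈ t ∧ u ∈ t then 1 else 0) := Finset.sum_comm
    _ = ∑ x ∈ A, ∑ u ∈ B, ∑ t ∈ P.lines, (if x ∈ t ∧ u ∈ t then 1 else 0) :=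
        Finset.sum_congr rfl fun x _ => Finset.sum_comm
    _ = ∑ x ∈ A, ∑ u ∈ B, (P.lines.filter (fun t => x ∈ t ∧ u ∈ t)).card :=
        Finset.sum_congr rfl fun x _ => Finset.sum_congr rfl fun u _ =>
          (Finset.card_filter _ _).symm
    _ = ∑ x ∈ A, ∑ u ∈ B, 1 :=
        Finset.sum_congr rfl fun x hx => Finset.sum_congr rfl fun u hu => hcount x hx u hu
    _ = A.card * B.card := by simp [mul_comm]

end Aux5


/-- if a PENT(3,r) with exactly two opposite line pairs exists, then the
number of lines entirely inside the 2(r-4) points of type C, namely (2r²-32r+132)/3, is at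
least 2r-8; equivalently (2r-19)² ≥ 49, so r ∉ {7,9,10,12}. -/
theorem stmt11 (r : ℕ) (V : Type) [Fintype V] [DecidableEq V] (P : PentGeom V 3 r)
    (l₁ m₁ l₂ m₂ : Finset V) (h₁ : P.OppPair l₁ m₁) (h₂ : P.OppPair l₂ m₂)
    (hdist : ({l₁, m₁} : Finset (Finset V)) ≠ {l₂, m₂})
    (honlytwo : ∀ l m : Finset V, P.OppPair l m →
      ({l, m} : Finset (Finset V)) = {l₁, m₁} ∨ ({l, m} : Finset (Finset V)) = {l₂, m₂}) :
    ∀ C : Finset V, C = Finset.univ \ (l₁ ∪ m₁ ∪ l₂ ∪ m₂) →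
      (2 * r ≤ (P.lines.filter (fun t => t ⊆ C)).card + 8 ∧
        3 * (P.lines.filter (fun t => t ⊆ C)).card + 32 * r = 2 * r ^ 2 + 132) ∧
      (49 : ℤ) ≤ (2 * (r : ℤ) - 19) ^ 2 ∧
      r ∉ ({7, 9, 10, 12} : Set ℕ) := by
  classical
  intro C hC
  set A : Finset V := l₁ ∪ m₁ with hA
  set B : Finset V := l₂ ∪ m₂ with hB
  set S : Finset V := A ∪ l₂ ∪ m₂ with hS
  have hSAB : S = A ∪ B := Finset.union_assoc A l₂ m₂
  clear_value A B S
  -- line memberships and cards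
  have hl₁ := h₁.1
  have hm₁ := h₁.2.1
  have hl₂ := h₂.1
  have hm₂ := h₂.2.1
  have hcl₁ : l₁.card = 3 := P.uniform _ hl₁
  have hcm₁ : m₁.card = 3 := P.uniform _ hm₁
  have hcl₂ : l₂.card = 3 := P.uniform _ hl₂
  have hcm₂ : m₂.card = 3 := P.uniform _ hm₂
  -- disjointness facts
  have d11 : Disjoint l₁ m₁ := Aux4.oppPair_disjoint h₁
  have d22 : Disjoint l₂ m₂ := Aux4.oppPair_disjoint h₂
  have hd' : ({l₁, m₁} : Finset (Finset V)) ≠ {m₂, l₂} := by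
    rw [Finset.pair_comm m₂ l₂]; exact hdist
  have hd'' : ({m₁, l₁} : Finset (Finset V)) ≠ {l₂, m₂} := by
    rw [Finset.pair_comm m₁ l₁]; exact hdist
  have hd''' : ({m₁, l₁} : Finset (Finset V)) ≠ {m₂, l₂} := by
    rw [Finset.pair_comm m₁ l₁, Finset.pair_comm m₂ l₂]; exact hdist
  have dll : Disjoint l₁ l₂ := Aux4.cross_disjoint h₁ h₂ hdist
  have dlm : Disjoint l₁ m₂ := Aux4.cross_disjoint h₁ (Aux4.oppPair_symm h₂) hd'
  have dml : Disjoint m₁ l₂ := Aux4.cross_disjoint (Aux4.oppPair_symm h₁) h₂ hd''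
  have dmm : Disjoint m₁ m₂ :=
    Aux4.cross_disjoint (Aux4.oppPair_symm h₁) (Aux4.oppPair_symm h₂) hd'''
  have dAB : Disjoint A B := by
    rw [hA, hB, Finset.disjoint_union_left, Finset.disjoint_union_right,
      Finset.disjoint_union_right]
    exact ⟨⟨dll, dlm⟩, dml, dmm⟩
  have hAcard : A.card = 6 := by
    rw [hA, Finset.card_union_of_disjoint d11, hcl₁, hcm₁]
  have hBcard : B.card = 6 := by
    rw [hB, Finset.card_union_of_disjoint d22, hcl₂, hcm₂]
  have hScard : S.card = 12 := by
    rw [hSAB, Finset.card_union_of_disjoint dAB, hAcard, hBcard]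
  -- a point exists
  obtain ⟨x₀, hx₀⟩ : l₁.Nonempty := by rw [← Finset.card_pos, hcl₁]; omega
  have hv : (Finset.univ : Finset V).card = 2 * r + 4 := Aux3.card_univ P x₀
  -- total number of lines
  have hb : 3 * P.lines.card = 2 * r ^ 2 + 4 * r := by
    have hsum := Aux3.sum_inter_card P Finset.univ
    have h3 : ∑ t ∈ P.lines, (t ∩ Finset.univ).card = ∑ t ∈ P.lines, 3 :=
      Finset.sum_congr rfl fun t ht => by rw [Finset.inter_univ, P.uniform t ht]
    rw [h3, Finset.sum_const, smul_eq_mul, hv] at hsum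
    have : (2 * r + 4) * r = 2 * r ^ 2 + 4 * r := by ring
    omega
  have hsumS : ∑ t ∈ P.lines, (t ∩ S).card = 12 * r := by
    rw [Aux3.sum_inter_card P S, hScard]
  have hle3 : ∀ t ∈ P.lines, (t ∩ S).card ≤ 3 := fun t ht =>
    le_trans (Finset.card_le_card Finset.inter_subset_left) (le_of_eq (P.uniform t ht))
  -- the four filter classes
  set F0 := P.lines.filter (fun t => (t ∩ S).card = 0) with hF0def
  set F1 := P.lines.filter (fun t => (t ∩ S).card = 1) with hF1def
  set F2 := P.lines.filter (fun t => (t ∩ S).card = 2) with hF2def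
  set F3 := P.lines.filter (fun t => (t ∩ S).card = 3) with hF3def
  clear_value F0 F1 F2 F3
  have hF0 : P.lines.filter (fun t => t ⊆ C) = F0 := by
    rw [hF0def]
    apply Finset.filter_congr
    intro t ht
    rw [hC, Finset.subset_sdiff, Finset.card_eq_zero, ← Finset.disjoint_iff_inter_eq_empty]
    simp [Finset.subset_univ]
  -- F3 is exactly the four lines
  have hsubS : ∀ t : Finset V, t = l₁ ∨ t = m₁ ∨ t = l₂ ∨ t = m₂ → t ⊆ S := by
    rintro t (rfl | rfl | rfl | rfl) <;> rw [hS, hA] <;> intro x hx <;> simp [hx]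
  have hF3 : F3 = {l₁, m₁, l₂, m₂} := by
    ext t
    rw [hF3def]
    simp only [Finset.mem_filter, Finset.mem_insert, Finset.mem_singleton]
    constructor
    · rintro ⟨ht, hc⟩
      have h2 : t ∩ S = t := Finset.eq_of_subset_of_card_le Finset.inter_subset_left
        (by rw [hc, P.uniform t ht])
      have htS : t ⊆ S := by rw [← h2]; exact Finset.inter_subset_right
      rw [hSAB, hA, hB] at htS
      exact Aux4.sub_S_eq h₁ h₂ ht htS
    · intro h
      have htS : t ⊆ S := hsubS t h
      have hmem : t ∈ P.lines := by rcases h with rfl | rfl | rfl | rfl <;> assumption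
      refine ⟨hmem, ?_⟩
      rw [Finset.inter_eq_left.2 htS, P.uniform t hmem]
  have hnecard : ∀ {a b : Finset V}, Disjoint a b → a.card = 3 → a ≠ b := by
    intro a b hd hc h
    subst h
    have ha : a = ∅ := Finset.bot_eq_empty ▸ disjoint_self.1 hd
    rw [ha] at hc
    simp at hc
  have hF3card : F3.card = 4 := by
    rw [hF3]
    rw [Finset.card_insert_of_notMem (by
      simp only [Finset.mem_insert, Finset.mem_singleton]
      push_neg
      exact ⟨Aux4.oppPair_ne h₁, hnecard dll hcl₁, hnecard dlm hcl₁⟩),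
      Finset.card_insert_of_notMem (by
      simp only [Finset.mem_insert, Finset.mem_singleton]
      push_neg
      exact ⟨hnecard dml hcm₁, hnecard dmm hcm₁⟩),
      Finset.card_insert_of_notMem (by
      simp only [Finset.mem_singleton]
      exact Aux4.oppPair_ne h₂), Finset.card_singleton]
  -- every A-B pair lies on exactly one line
  have hcount : ∀ x ∈ A, ∀ u ∈ B, (P.lines.filter (fun t => x ∈ t ∧ u ∈ t)).card = 1 := by
    intro x hx u hu
    have hxu : u ≠ x := by
      intro h
      subst h
      exact Finset.disjoint_left.1 dAB hx hu
    have hopp : u ∉ P.oppLine x := by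
      rw [hA, Finset.mem_union] at hx
      rw [hB, Finset.mem_union] at hu
      rcases hx with hx | hx
      · rw [h₁.2.2.2.1 x hx]
        rcases hu with hu | hu
        · exact fun h => Finset.disjoint_left.1 dml h hu
        · exact fun h => Finset.disjoint_left.1 dmm h hu
      · rw [h₁.2.2.2.2 x hx]
        rcases hu with hu | hu
        · exact fun h => Finset.disjoint_left.1 dll h hu
        · exact fun h => Finset.disjoint_left.1 dlm h hu
    exact Aux.pair_count P hxu hopp
  have hsumg : ∑ t ∈ P.lines, (t ∩ A).card * (t ∩ B).card = 36 := by
    rw [Aux5.sum_prod_eq A B hcount, hAcard, hBcard]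
  -- g t = 1 iff exactly two points in S
  have hg : ∀ t ∈ P.lines, (t ∩ A).card * (t ∩ B).card
      = if (t ∩ S).card = 2 then 1 else 0 := by
    intro t ht
    have hdisjAB : Disjoint (t ∩ A) (t ∩ B) :=
      dAB.mono Finset.inter_subset_right Finset.inter_subset_right
    have hsplit : (t ∩ S).card = (t ∩ A).card + (t ∩ B).card := by
      rw [hSAB, Finset.inter_union_distrib_left, Finset.card_union_of_disjoint hdisjAB]
    have hside : ∀ {W : Finset V} {lw mw : Finset V}, P.OppPair lw mw → W = lw ∪ mw →
        2 ≤ (t ∩ W).card → t = lw ∨ t = mw := by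
      intro W lw mw hpair hW h2
      have h2' : 1 < (t ∩ W).card := h2
      rw [Finset.one_lt_card] at h2'
      obtain ⟨p, hp, q, hq, hpq⟩ := h2'
      rw [Finset.mem_inter] at hp hq
      exact Aux4.side_line hpair ht (hW ▸ hp.2) (hW ▸ hq.2) hpq hp.1 hq.1
    by_cases hc2 : (t ∩ S).card = 2
    · rw [if_pos hc2]
      have hA2 : (t ∩ A).card ≤ 1 := by
        by_contra h
        push_neg at h
        rcases hside h₁ hA h with rfl | rfl
        · rw [Finset.inter_eq_left.2 (hsubS t (Or.inl rfl)), hcl₁] at hc2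
          omega
        · rw [Finset.inter_eq_left.2 (hsubS t (Or.inr (Or.inl rfl))), hcm₁] at hc2
          omega
      have hB2 : (t ∩ B).card ≤ 1 := by
        by_contra h
        push_neg at h
        rcases hside h₂ hB h with rfl | rfl
        · rw [Finset.inter_eq_left.2 (hsubS t (Or.inr (Or.inr (Or.inl rfl)))), hcl₂] at hc2
          omega
        · rw [Finset.inter_eq_left.2 (hsubS t (Or.inr (Or.inr (Or.inr rfl)))), hcm₂] at hc2
          omega
      have : (t ∩ A).card = 1 ∧ (t ∩ B).card = 1 := by omega
      rw [this.1, this.2]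
    · rw [if_neg hc2]
      rcases Nat.lt_or_ge (t ∩ S).card 2 with hlt | hge
      · have : (t ∩ A).card = 0 ∨ (t ∩ B).card = 0 := by omega
        rcases this with h | h <;> rw [h] <;> ring
      · have hc3 : (t ∩ S).card = 3 := by
          have := hle3 t ht
          omega
        have htF3 : t ∈ F3 := by
          rw [hF3def, Finset.mem_filter]
          exact ⟨ht, hc3⟩
        rw [hF3] at htF3
        simp only [Finset.mem_insert, Finset.mem_singleton] at htF3
        rcases htF3 with rfl | rfl | rfl | rfl
        · have hz : t ∩ B = ∅ := Finset.disjoint_iff_inter_eq_empty.1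
            (by rw [hB, Finset.disjoint_union_right]; exact ⟨dll, dlm⟩)
          rw [hz, Finset.card_empty, mul_zero]
        · have hz : t ∩ B = ∅ := Finset.disjoint_iff_inter_eq_empty.1
            (by rw [hB, Finset.disjoint_union_right]; exact ⟨dml, dmm⟩)
          rw [hz, Finset.card_empty, mul_zero]
        · have hz : t ∩ A = ∅ := Finset.disjoint_iff_inter_eq_empty.1
            (by rw [hA, Finset.disjoint_union_right]; exact ⟨dll.symm, dml.symm⟩)
          rw [hz, Finset.card_empty, zero_mul]
        · have hz : t ∩ A = ∅ := Finset.disjoint_iff_inter_eq_empty.1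
            (by rw [hA, Finset.disjoint_union_right]; exact ⟨dlm.symm, dmm.symm⟩)
          rw [hz, Finset.card_empty, zero_mul]
  -- F2 has 36 lines
  have hF2card : F2.card = 36 := by
    rw [hF2def, Finset.card_filter]
    rw [← hsumg]
    exact (Finset.sum_congr rfl hg).symm
  -- partition equations
  have eq1 : 12 * r = F1.card + 2 * F2.card + 3 * F3.card := by
    rw [← hsumS, hF1def, hF2def, hF3def]
    exact Aux5.sum_split P.lines (fun t => (t ∩ S).card) hle3
  have eqb : P.lines.card = F0.card + F1.card + F2.card + F3.card := by
    rw [hF0def, hF1def, hF2def, hF3def]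
    exact Aux5.card_split P.lines (fun t => (t ∩ S).card) hle3
  -- the cardinality of C
  have hCcard : C.card + 12 = 2 * r + 4 := by
    rw [hC, ← hScard, ← hv]
    exact Finset.card_sdiff_add_card_eq_card (Finset.subset_univ S)
  -- injection from C into the lines inside C
  have hinj : C.card ≤ F0.card := by
    rw [← hF0]
    apply Finset.card_le_card_of_injOn (fun x => P.oppLine x)
    · intro x hx
      rw [hC, Finset.mem_coe, Finset.mem_sdiff, hS, hA] at hx
      rw [Finset.mem_coe, Finset.mem_filter]
      refine ⟨P.opp x, ?_⟩
      rw [hC, hS, hA]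
      exact Aux4.oppLine_subset_C h₁ h₂ hx.2
    · intro x hx y hy hxy
      by_contra hne
      have hx' : x ∈ C := hx
      rw [hC, Finset.mem_sdiff, hS, hA] at hx'
      exact Aux4.oppLine_injOn honlytwo hx'.2 hne hxy
  -- main arithmetic
  have key : 3 * (P.lines.filter (fun t => t ⊆ C)).card + 32 * r = 2 * r ^ 2 + 132 := by
    rw [hF0]
    rw [hF2card, hF3card] at eq1 eqb
    have hq : ∃ q, r ^ 2 = q := ⟨r ^ 2, rfl⟩
    obtain ⟨q, hq⟩ := hq
    rw [hq] at hb ⊢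
    omega
  have hle : 2 * r ≤ (P.lines.filter (fun t => t ⊆ C)).card + 8 := by
    rw [hF0]
    omega
  have k1 : (3 : ℤ) * ((P.lines.filter (fun t => t ⊆ C)).card : ℤ) + 32 * r
      = 2 * (r : ℤ) ^ 2 + 132 := by exact_mod_cast key
  have k2 : (2 : ℤ) * r ≤ ((P.lines.filter (fun t => t ⊆ C)).card : ℤ) + 8 := by
    exact_mod_cast hle
  have hsq : (49 : ℤ) ≤ (2 * (r : ℤ) - 19) ^ 2 := by nlinarith [k1, k2]
  refine ⟨⟨hle, key⟩, hsq, ?_⟩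
  intro hr
  have hr' : r = 7 ∨ r = 9 ∨ r = 10 ∨ r = 12 := by
    simpa [Set.mem_insert_iff, Set.mem_singleton_iff] using hr
  rcases hr' with h | h | h | h <;> rw [h] at hsq <;> norm_num at hsq
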